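/- arXiv:1905.01949 — 2 statements merged into one kernel-verified Lean document; each statement's English description precedes it below -/
import Mathlib

section
/- Let G be an l-group, A a Q-algebra, and V an irreducible smooth (A,G)-module that is A-admissible (V^L is a finitely generated A-module for every open compact subgroup L). Then the annihilator Ann_A(V) is a maximal ideal of A. -/
/-- The A-submodule of L-fixed vectors of a module with commuting A-linear G-action. -/
def invariants {G A V : Type*} [Group G] [CommRing A]
    [AddCommGroup V] [Module A V] [DistribMulAction G V] [SMulCommClass G A V]
    (L : Subgroup G) : Submodule A V where
  carrier := {v | ∀ l ∈ L, l • v = v}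
  add_mem' := by
    intro a b ha hb l hl
    rw [smul_add, ha l hl, hb l hl]
  zero_mem' := by
    intro l _
    exact smul_zero l
  smul_mem' := by
    intro a v hv l hl
    rw [smul_comm, hv l hl]

section Avg

variable {G A V : Type*} [Group G] [CommRing A]
    [AddCommGroup V] [Module A V] [DistribMulAction G V] [SMulCommClass G A V]

/-- Averaging (without normalization) over the cosets of `N` in `K`. -/
noncomputable def avgHom (K N : Subgroup G) [Fintype (K ⧸ N.subgroupOf K)] :
    V →ₗ[A] V where
  toFun v := ∑ c : K ⧸ N.subgroupOf K, ((Quotient.out c : K) : G) • v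
  map_add' := by
    intro v w
    simp [smul_add, Finset.sum_add_distrib]
  map_smul' := by
    intro a v
    rw [RingHom.id_apply, Finset.smul_sum]
    exact Finset.sum_congr rfl fun c _ => smul_comm _ _ _

lemma coset_smul_eq {N K : Subgroup G} (v : V) (hv : ∀ g ∈ N, g • v = v)
    {l₁ l₂ : K} (h : (l₁ : K ⧸ N.subgroupOf K) = (l₂ : K ⧸ N.subgroupOf K)) :
    (l₁ : G) • v = (l₂ : G) • v := by
  have h1 : l₁⁻¹ * l₂ ∈ N.subgroupOf K := QuotientGroup.leftRel_apply.mp (Quotient.exact' h)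
  have h2 : ((l₁⁻¹ * l₂ : K) : G) ∈ N := h1
  have h3 : ((l₁⁻¹ * l₂ : K) : G) • v = v := hv _ h2
  calc (l₁ : G) • v = (l₁ : G) • ((l₁⁻¹ * l₂ : K) : G) • v := by rw [h3]
    _ = ((l₁ * (l₁⁻¹ * l₂) : K) : G) • v := by rw [← mul_smul]; norm_cast
    _ = (l₂ : G) • v := by rw [mul_inv_cancel_left]

lemma smul_avgHom {K N : Subgroup G} [Fintype (K ⧸ N.subgroupOf K)]
    (v : V) (hv : ∀ g ∈ N, g • v = v) (g : K) :
    (g : G) • (avgHom (A := A) K N v) = avgHom (A := A) K N v := by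
  classical
  unfold avgHom
  simp only [LinearMap.coe_mk, AddHom.coe_mk]
  rw [Finset.smul_sum]
  have step : ∀ c : K ⧸ N.subgroupOf K,
      (g : G) • ((Quotient.out c : K) : G) • v = ((Quotient.out (g • c) : K) : G) • v := by
    intro c
    rw [← mul_smul]
    have hcast : ((g : G) * ((Quotient.out c : K) : G)) = ((g * Quotient.out c : K) : G) := rfl
    rw [hcast]
    refine coset_smul_eq v hv ?_
    have h1 : ((g * Quotient.out c : K) : K ⧸ N.subgroupOf K) = g • c := by
      conv_rhs => rw [← QuotientGroup.out_eq' c]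
      exact (MulAction.Quotient.smul_mk _ g (Quotient.out c)).symm
    rw [h1, QuotientGroup.out_eq']
  rw [Finset.sum_congr rfl fun c _ => step c]
  exact Fintype.sum_equiv (MulAction.toPerm g) _ _ (fun c => rfl)

lemma avgHom_fixed {K N : Subgroup G} [Fintype (K ⧸ N.subgroupOf K)]
    (v : V) (hv : ∀ g ∈ K, g • v = v) :
    avgHom (A := A) K N v = (Fintype.card (K ⧸ N.subgroupOf K)) • v := by
  unfold avgHom
  simp only [LinearMap.coe_mk, AddHom.coe_mk]
  rw [Finset.sum_congr rfl fun c _ => hv _ (Quotient.out c).2]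
  simp

end Avg

/-- Let G be an l-group, A a ℚ-algebra, and V a nonzero irreducible smooth (A,G)-module which
is A-admissible (V^L is finitely generated over A for every open compact subgroup L).
Then Ann_A(V) is a maximal ideal of A. -/
theorem stmt_5 {G A V : Type*} [Group G] [TopologicalSpace G] [IsTopologicalGroup G]
    [CommRing A] [Algebra ℚ A]
    [AddCommGroup V] [Module A V] [DistribMulAction G V] [SMulCommClass G A V]
    [Nontrivial V]
    (hbasis : ∀ U ∈ nhds (1 : G), ∃ K : Subgroup G,
      IsOpen (K : Set G) ∧ IsCompact (K : Set G) ∧ (K : Set G) ⊆ U)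
    (hsmooth : ∀ v : V, IsOpen {g : G | g • v = v})
    (hirr : ∀ W : Submodule A V, (∀ g : G, ∀ v ∈ W, g • v ∈ W) → W = ⊥ ∨ W = ⊤)
    (hadm : ∀ L : Subgroup G, IsOpen (L : Set G) → IsCompact (L : Set G) →
      (invariants (G := G) (A := A) (V := V) L).FG) :
    (Module.annihilator A V).IsMaximal := by
  classical
  -- the annihilator is a proper ideal
  have hne : Module.annihilator A V ≠ ⊤ := by
    intro h
    obtain ⟨v, hv⟩ := exists_ne (0 : V)
    have h1 : (1 : A) ∈ Module.annihilator A V := h ▸ Submodule.mem_top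
    have := Module.mem_annihilator.mp h1 v
    simp at this
    exact hv this
  obtain ⟨m, hm, hle⟩ := Ideal.exists_le_maximal _ hne
  suffices h : m ≤ Module.annihilator A V by
    rwa [le_antisymm h hle] at hm
  -- consider the G-stable submodule m • V
  have hstab : ∀ g : G, ∀ v ∈ (m • ⊤ : Submodule A V), g • v ∈ (m • ⊤ : Submodule A V) := by
    intro g v hv
    refine Submodule.smul_induction_on hv ?_ ?_
    · intro a ha w _
      rw [smul_comm]
      exact Submodule.smul_mem_smul ha Submodule.mem_top
    · intro x y hx hy
      rw [smul_add]
      exact Submodule.add_mem _ hx hy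
  rcases hirr (m • ⊤) hstab with hbot | htop
  · -- m • V = 0, so m ⊆ Ann, done
    intro a ha
    rw [Module.mem_annihilator]
    intro v
    have : a • v ∈ (m • ⊤ : Submodule A V) := Submodule.smul_mem_smul ha Submodule.mem_top
    rw [hbot] at this
    simpa using this
  · -- m • V = V leads to a contradiction
    exfalso
    obtain ⟨v₀, hv₀⟩ := exists_ne (0 : V)
    -- find an open compact subgroup fixing v₀
    have hnhds : {g : G | g • v₀ = v₀} ∈ nhds (1 : G) :=
      (hsmooth v₀).mem_nhds (by simp)
    obtain ⟨K, hKopen, hKcomp, hKsub⟩ := hbasis _ hnhds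
    have hv₀K : v₀ ∈ invariants (G := G) (A := A) (V := V) K := fun l hl => hKsub hl
    -- key step: invariants K ≤ m • invariants K
    have key : invariants (G := G) (A := A) (V := V) K ≤
        m • invariants (G := G) (A := A) (V := V) K := by
      intro w hw
      -- write w as a finite m-linear combination of elements of V
      have hw' : w ∈ m • Submodule.span A (Set.range (id : V → V)) := by
        rw [Set.range_id, Submodule.span_univ]
        rw [htop]; exact Submodule.mem_top
      obtain ⟨a, ha, hsum⟩ :=
        (Submodule.mem_ideal_smul_span_iff_exists_sum m (id : V → V) w).mp hw'
      set s : Finset V := a.support with hs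
      -- the subgroup fixing all elements of s, intersected with K
      set N : Subgroup G := K ⊓ ⨅ v ∈ s, MulAction.stabilizer G v with hN
      have hNopen : IsOpen (N : Set G) := by
        have hcar : (N : Set G) = (K : Set G) ∩ ⋂ v ∈ s, {g : G | g • v = v} := by
          ext g
          simp [hN, Subgroup.mem_iInf, MulAction.mem_stabilizer_iff]
        rw [hcar]
        exact hKopen.inter (isOpen_biInter_finset fun v _ => hsmooth v)
      have hNmem : ∀ g ∈ N, ∀ v ∈ s, g • v = v := by
        intro g hg v hv
        have h2 : g ∈ ⨅ v ∈ s, MulAction.stabilizer G v := hg.2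
        rw [Subgroup.mem_iInf] at h2
        have h3 := h2 v
        rw [Subgroup.mem_iInf] at h3
        exact h3 hv
      -- the quotient K / N is finite
    
      have hKcs : CompactSpace K := isCompact_iff_compactSpace.mp hKcomp
      have hNKopen : IsOpen ((N.subgroupOf K : Subgroup K) : Set K) := by
        have : ((N.subgroupOf K : Subgroup K) : Set K) = Subtype.val ⁻¹' (N : Set G) := by
          ext x
          simp [Subgroup.mem_subgroupOf]
        rw [this]
        exact hNopen.preimage continuous_subtype_val
      have hfin : Finite (K ⧸ N.subgroupOf K) :=
        Subgroup.quotient_finite_of_isOpen (N.subgroupOf K) hNKopen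
      have hfint : Fintype (K ⧸ N.subgroupOf K) := Fintype.ofFinite _
      set n : ℕ := Fintype.card (K ⧸ N.subgroupOf K) with hn
      have hnpos : 0 < n := Fintype.card_pos
      -- average of w lies in m • invariants K
      have havg_mem : avgHom (A := A) K N w ∈
          m • invariants (G := G) (A := A) (V := V) K := by
        rw [← hsum]
        rw [Finsupp.sum, map_sum]
        refine Submodule.sum_mem _ ?_
        intro v hv
        rw [map_smul]
        refine Submodule.smul_mem_smul (ha v) ?_
        intro l hl
        exact smul_avgHom (A := A) v (fun g hg => hNmem g hg v hv) ⟨l, hl⟩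
      -- but the average of w is n • w
      have havg_eq : avgHom (A := A) K N w = n • w :=
        avgHom_fixed (A := A) w (fun g hg => hw g hg)
      -- so w ∈ m • invariants K
      have hcalc : w = (algebraMap ℚ A (n : ℚ)⁻¹) • avgHom (A := A) K N w := by
        rw [havg_eq, ← Nat.cast_smul_eq_nsmul A n w, smul_smul]
        have : (algebraMap ℚ A (n : ℚ)⁻¹) * (n : A) = 1 := by
          rw [← map_natCast (algebraMap ℚ A) n, ← map_mul, inv_mul_cancel₀ (by
            exact_mod_cast hnpos.ne'), map_one]
        rw [this, one_smul]
      rw [hcalc]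
      exact Submodule.smul_mem _ _ havg_mem
    -- Nakayama's lemma
    obtain ⟨r, hrm, hr⟩ :=
      Submodule.exists_sub_one_mem_and_smul_eq_zero_of_fg_of_le_smul m
        (invariants (G := G) (A := A) (V := V) K) (hadm K hKopen hKcomp) key
    -- the kernel of r is a G-stable submodule containing v₀ ≠ 0, so it is everything
    set W : Submodule A V :=
      { carrier := {w : V | r • w = 0}
        add_mem' := by intro x y hx hy; simp only [Set.mem_setOf_eq] at *;
                       rw [smul_add, hx, hy, add_zero]
        zero_mem' := by simp
        smul_mem' := by intro c x hx; simp only [Set.mem_setOf_eq] at *;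
                        rw [smul_comm, hx, smul_zero] } with hW
    have hWstab : ∀ g : G, ∀ w ∈ W, g • w ∈ W := by
      intro g w hw
      show r • g • w = 0
      rw [← smul_comm, hw, smul_zero]
      
    have hWtop : W = ⊤ := by
      rcases hirr W hWstab with hb | ht
      · exfalso
        have : v₀ ∈ W := hr v₀ hv₀K
        rw [hb] at this
        exact hv₀ (by simpa using this)
      · exact ht
    -- hence r annihilates V, so r ∈ m, so 1 ∈ m, contradiction
    have hrann : r ∈ Module.annihilator A V := by
      rw [Module.mem_annihilator]
      intro w
      have : w ∈ W := hWtop ▸ Submodule.mem_top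
      exact this
    have hrm' : r ∈ m := hle hrann
    have : (1 : A) ∈ m := by
      have := m.sub_mem hrm' hrm
      simpa using this
    exact hm.ne_top (m.eq_top_iff_one.mpr this)
end

section
/- Let A be a field of characteristic zero, D a finite-dimensional division A-algebra whose center contains A, and W a finite-dimensional left D-vector space. Then for any field extension B of A, the B-algebra B ⊗_A End_D(W) is semisimple. -/
open TensorProduct


section ModuleLemmas

variable {R M N : Type*} [Ring R] [AddCommGroup M] [Module R M] [AddCommGroup N] [Module R N]

theorem aux_ss_of_subsingleton [Subsingleton M] : IsSemisimpleModule R M :=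
  { exists_isCompl := fun a => ⟨⊤, by rw [Subsingleton.elim a ⊥]; exact isCompl_bot_top⟩ }

theorem aux_ss_prod [IsSemisimpleModule R M] [IsSemisimpleModule R N] :
    IsSemisimpleModule R (M × N) := by
  refine isSemisimpleModule_of_isSemisimpleModule_submodule (s := (Set.univ : Set Bool))
    (p := fun b : Bool => if b then LinearMap.range (LinearMap.inl R M N)
      else LinearMap.range (LinearMap.inr R M N)) ?_ ?_
  · rintro (_ | _) -
    · show IsSemisimpleModule R (LinearMap.range (LinearMap.inr R M N))
      exact .congr (LinearEquiv.ofInjective _ LinearMap.inr_injective).symm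
    · show IsSemisimpleModule R (LinearMap.range (LinearMap.inl R M N))
      exact .congr (LinearEquiv.ofInjective _ LinearMap.inl_injective).symm
  · rw [iSup_univ, iSup_bool_eq, if_pos rfl, if_neg (by simp)]
    exact LinearMap.sup_range_inl_inr

theorem aux_ss_quot_inf (p q : Submodule R M) [IsSemisimpleModule R (M ⧸ p)]
    [IsSemisimpleModule R (M ⧸ q)] : IsSemisimpleModule R (M ⧸ (p ⊓ q)) := by
  haveI : IsSemisimpleModule R ((M ⧸ p) × (M ⧸ q)) := aux_ss_prod
  let f : M →ₗ[R] (M ⧸ p) × (M ⧸ q) := (p.mkQ).prod (q.mkQ)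
  have hker : LinearMap.ker f = p ⊓ q := by
    simp [f, LinearMap.ker_prod, Submodule.ker_mkQ]
  haveI : IsSemisimpleModule R (LinearMap.range f) := inferInstance
  have e : (M ⧸ (p ⊓ q)) ≃ₗ[R] LinearMap.range f := hker ▸ f.quotKerEquivRange
  exact .congr e

theorem aux_ss_quot_finset_inf {ι : Type*} (s : Finset ι) (m : ι → Submodule R M)
    (h : ∀ i ∈ s, IsSemisimpleModule R (M ⧸ m i)) :
    IsSemisimpleModule R (M ⧸ (s.inf m)) := by
  classical
  revert h
  induction s using Finset.induction_on with
  | empty =>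
      intro h
      rw [Finset.inf_empty]
      haveI : Subsingleton (M ⧸ (⊤ : Submodule R M)) :=
        Submodule.Quotient.subsingleton_iff.mpr rfl
      exact aux_ss_of_subsingleton
  | @insert a s ha ih =>
      intro h
      rw [Finset.inf_insert]
      haveI := h a (Finset.mem_insert_self _ _)
      haveI := ih (fun i hi => h i (Finset.mem_insert_of_mem hi))
      exact aux_ss_quot_inf _ _

theorem aux_ss_ring {R : Type*} [Ring R] [IsArtinian R R]
    (h : sInf {m : Ideal R | m.IsMaximal} = ⊥) : IsSemisimpleRing R := by
  classical
  by_cases hne : {m : Ideal R | m.IsMaximal}.Nonempty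
  · -- find minimal finite inf
    set S : Set (Ideal R) :=
      {I : Ideal R | ∃ s : Finset (Ideal R), (∀ m ∈ s, m.IsMaximal) ∧ I = s.inf id} with hS
    obtain ⟨m0, hm0⟩ := hne
    have hSne : S.Nonempty := ⟨m0, {m0}, by simpa using hm0, by simp⟩
    obtain ⟨N, hNS, hNmin⟩ := IsArtinian.set_has_minimal S hSne
    obtain ⟨s, hs, hNs⟩ := hNS
    have hNbot : N = ⊥ := by
      rw [← le_bot_iff, ← h]
      refine le_sInf ?_
      intro m hm
      have hmem : N ⊓ m ∈ S := ⟨insert m s, by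
          intro x hx
          rcases Finset.mem_insert.mp hx with rfl | hx
          · exact hm
          · exact hs x hx, by rw [Finset.inf_insert, ← hNs, inf_comm]; rfl⟩
      have hnlt : ¬ (N ⊓ m < N) := hNmin _ hmem
      have hle : N ⊓ m ≤ N := inf_le_left
      have heq : N ⊓ m = N := (lt_or_eq_of_le hle).resolve_left hnlt
      rw [← heq]; exact inf_le_right
    haveI : IsSemisimpleModule R (R ⧸ (s.inf id)) := by
      refine aux_ss_quot_finset_inf s id (fun i hi => ?_)
      haveI : IsSimpleModule R (R ⧸ (id i : Ideal R)) :=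
        isSimpleModule_iff_isCoatom.mpr (hs i hi).out
      infer_instance
    have hbot : (s.inf id : Ideal R) = ⊥ := by rw [← hNs, hNbot]
    exact IsSemisimpleModule.congr (Submodule.quotEquivOfEqBot _ hbot).symm
  · rw [Set.not_nonempty_iff_eq_empty] at hne
    rw [hne, sInf_empty] at h
    have h01 : (1 : R) = 0 := by
      have : (1 : R) ∈ (⊥ : Ideal R) := h ▸ Submodule.mem_top
      simpa using this
    haveI : Subsingleton R := subsingleton_of_zero_eq_one h01.symm
    exact aux_ss_of_subsingleton

end ModuleLemmas

section Radical

variable {R : Type*} [Ring R]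

/-- Elements of the intersection of all maximal left ideals of a left-Artinian ring
are nilpotent. -/
theorem aux_rad_nilpotent [IsArtinian R R] {z : R}
    (hz : z ∈ sInf {m : Ideal R | m.IsMaximal}) : IsNilpotent z := by
  have key : ∀ a : R, ∃ b : R, b * (1 - a * z) = 1 := by
    intro a
    have hspan : Ideal.span {1 - a * z} = ⊤ := by
      by_contra hcon
      obtain ⟨m, hm, hle⟩ := Ideal.exists_le_maximal _ hcon
      have h1 : 1 - a * z ∈ m := hle (Ideal.subset_span rfl)
      have h2 : a * z ∈ m := by
        have hzm : z ∈ m := (Submodule.mem_sInf.mp hz) m hm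
        exact Ideal.mul_mem_left _ _ hzm
      have : (1 : R) ∈ m := by
        have := m.add_mem h1 h2
        simpa using this
      exact hm.ne_top (Ideal.eq_top_of_isUnit_mem m this isUnit_one)
    have h1 : (1 : R) ∈ Ideal.span {1 - a * z} := hspan ▸ Submodule.mem_top
    obtain ⟨b, hb⟩ := Submodule.mem_span_singleton.mp h1
    exact ⟨b, by simpa [smul_eq_mul] using hb⟩
  -- descending chain of spans of powers
  let f : ℕ →o (Submodule R R)ᵒᵈ :=
    ⟨fun n => Ideal.span {z ^ n}, by
      intro n m hnm
      show Ideal.span {z ^ m} ≤ Ideal.span {z ^ n}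
      rw [Ideal.span_le]
      intro x hx
      rcases hx with rfl
      exact Submodule.mem_span_singleton.mpr
        ⟨z ^ (m - n), by rw [smul_eq_mul, ← pow_add, Nat.sub_add_cancel hnm]⟩⟩
  obtain ⟨n, hn⟩ := IsArtinian.monotone_stabilizes f
  have hmem : z ^ n ∈ Ideal.span {z ^ (n + 1)} := by
    have := hn (n + 1) (Nat.le_succ n)
    have : Ideal.span {z ^ n} = Ideal.span {z ^ (n+1)} := this
    rw [← this]
    exact Submodule.mem_span_singleton.mpr ⟨1, by simp⟩
  obtain ⟨a, ha⟩ := Submodule.mem_span_singleton.mp hmem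
  rw [smul_eq_mul] at ha
  obtain ⟨b, hb⟩ := key a
  refine ⟨n, ?_⟩
  have h0 : (1 - a * z) * z ^ n = 0 := by
    have : a * z ^ (n + 1) = (a * z) * z ^ n := by
      rw [pow_succ', ← mul_assoc]
    rw [sub_mul, one_mul, ← this, ha, sub_self]
  calc z ^ n = (b * (1 - a * z)) * z ^ n := by rw [hb, one_mul]
    _ = b * ((1 - a * z) * z ^ n) := by rw [mul_assoc]
    _ = 0 := by rw [h0, mul_zero]

end Radical

section TraceCriterion

/-- Dickson's criterion: a finite-dimensional algebra over a field with a
nondegenerate trace form is semisimple. -/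
theorem aux_semisimple_of_trace_nondeg (B R : Type*) [Field B] [Ring R] [Algebra B R]
    [FiniteDimensional B R]
    (hT : ∀ x : R, x ≠ 0 → ∃ y : R,
      LinearMap.trace B R (Algebra.lmul B R (x * y)) ≠ 0) :
    IsSemisimpleRing R := by
  haveI : IsArtinian R R := isArtinian_of_tower B inferInstance
  apply aux_ss_ring
  rw [eq_bot_iff]
  intro x hx
  rw [Submodule.mem_bot]
  by_contra hx0
  obtain ⟨y, hy⟩ := hT x hx0
  apply hy
  rw [map_mul (Algebra.lmul B R) x y, LinearMap.trace_mul_comm,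
    ← map_mul (Algebra.lmul B R) y x]
  have hyx : y * x ∈ sInf {m : Ideal R | m.IsMaximal} := by
    refine Submodule.mem_sInf.mpr fun m hm => ?_
    exact Ideal.mul_mem_left _ _ ((Submodule.mem_sInf.mp hx) m hm)
  have h1 : IsNilpotent (y * x) := aux_rad_nilpotent hyx
  have h2 : IsNilpotent ((Algebra.lmul B R) (y * x)) := h1.map (Algebra.lmul B R)
  exact (LinearMap.isNilpotent_trace_of_isNilpotent h2).eq_zero

end TraceCriterion

section BaseChange

variable (A E B : Type*) [Field A] [Ring E] [Algebra A E] [FiniteDimensional A E]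
  [Field B] [Algebra A B]

/-- Nondegeneracy of the trace form survives base field change. -/
theorem aux_trace_nondeg_baseChange
    (hT : ∀ x : E, x ≠ 0 → ∃ y : E,
      LinearMap.trace A E (Algebra.lmul A E (x * y)) ≠ 0) :
    ∀ u : B ⊗[A] E, u ≠ 0 → ∃ v : B ⊗[A] E,
      LinearMap.trace B (B ⊗[A] E) (Algebra.lmul B (B ⊗[A] E) (u * v)) ≠ 0 := by
  classical
  -- the trace bilinear form
  set T : LinearMap.BilinForm A E :=
    LinearMap.compr₂ (LinearMap.mul A E)
      ((LinearMap.trace A E).comp (Algebra.lmul A E).toLinearMap) with hTdef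
  have hTapp : ∀ x y : E, T x y = LinearMap.trace A E (Algebra.lmul A E (x * y)) := by
    intro x y; simp [hTdef]
  have hTsymm : ∀ x y : E, T x y = T y x := by
    intro x y
    rw [hTapp, hTapp, map_mul (Algebra.lmul A E) x y, map_mul (Algebra.lmul A E) y x,
      LinearMap.trace_mul_comm]
  have hTnd : T.Nondegenerate := by
    have hsep : T.SeparatingLeft := by
      intro x hx
      by_contra hx0
      obtain ⟨y, hy⟩ := hT x hx0
      exact hy ((hTapp x y) ▸ hx y)
    exact ⟨hsep, fun y hy => hsep y fun x => (hTsymm y x).trans (hy x)⟩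
  let b := Module.Free.chooseBasis A E
  set ι := Module.Free.ChooseBasisIndex A E
  let d := T.dualBasis hTnd b
  let bb := b.baseChange B
  -- key formula for the base-changed trace form against 1 ⊗ w
  have hlmul : ∀ w : E, (Algebra.lmul B (B ⊗[A] E)) ((1 : B) ⊗ₜ[A] w)
      = (Algebra.lmul A E w).baseChange B := by
    intro w
    apply LinearMap.ext
    intro u
    induction u with
    | zero => simp
    | tmul c e =>
        simp [Algebra.TensorProduct.tmul_mul_tmul]
    | add u v hu hv =>
        simp only [map_add, hu, hv]
  intro u hu
  -- find a nonzero coordinate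
  have hrep : ∃ j : ι, bb.repr u j ≠ 0 := by
    by_contra hcon
    push_neg at hcon
    apply hu
    have h0 : bb.repr u = 0 := Finsupp.ext fun j => hcon j
    exact bb.repr.map_eq_zero_iff.mp h0
  obtain ⟨j, hj⟩ := hrep
  refine ⟨(1 : B) ⊗ₜ[A] (d j), ?_⟩
  -- the linear functional u ↦ trace (lmul (u * (1 ⊗ d j)))
  set Φ : (B ⊗[A] E) →ₗ[B] B :=
    (LinearMap.trace B (B ⊗[A] E)).comp
      ((Algebra.lmul B (B ⊗[A] E)).toLinearMap.comp
        (LinearMap.mulRight B ((1 : B) ⊗ₜ[A] (d j)))) with hΦdef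
  have hΦapp : ∀ u : B ⊗[A] E,
      Φ u = LinearMap.trace B (B ⊗[A] E) (Algebra.lmul B (B ⊗[A] E) (u * ((1:B) ⊗ₜ[A] d j))) := by
    intro u; simp [hΦdef]
  have hΦtmul : ∀ e : E, Φ ((1 : B) ⊗ₜ[A] e) = algebraMap A B (T e (d j)) := by
    intro e
    rw [hΦapp, Algebra.TensorProduct.tmul_mul_tmul, one_mul, hlmul,
      LinearMap.trace_baseChange, hTapp]
  rw [← hΦapp]
  have hexp : Φ u = ∑ i, bb.repr u i • Φ (bb i) := by
    conv_lhs => rw [← bb.sum_repr u]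
    rw [map_sum]
    simp [map_smul]
  have hbbi : ∀ i : ι, bb i = (1 : B) ⊗ₜ[A] b i := fun i => Module.Basis.baseChange_apply B b i
  have hval : ∀ i : ι, Φ (bb i) = if i = j then 1 else 0 := by
    intro i
    rw [hbbi, hΦtmul, hTsymm, LinearMap.BilinForm.apply_dualBasis_left]
    split <;> simp
  rw [hexp]
  simp only [hval, smul_eq_mul, mul_ite, mul_one, mul_zero]
  rw [Finset.sum_ite_eq' Finset.univ j (fun i => bb.repr u i)]
  simpa using hj

end BaseChange

/-- Let A be a field of characteristic zero, D a finite-dimensional division A-algebra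
(so its center contains A), and W a finite-dimensional left D-vector space.  Then for any
field extension B of A, the B-algebra B ⊗_A End_D(W) is semisimple. -/
theorem stmt_12 {A D W B : Type*} [Field A] [CharZero A]
    [DivisionRing D] [Algebra A D] [FiniteDimensional A D]
    [AddCommGroup W] [Module D W] [Module.Finite D W]
    [Module A W] [IsScalarTower A D W]
    [Field B] [Algebra A B] :
    IsSemisimpleRing (B ⊗[A] Module.End D W) := by
  classical
  set E := Module.End D W with hE
  rcases subsingleton_or_nontrivial W with hW | hW
  · -- trivial case
    haveI : Subsingleton E := by
      constructor
      intro f g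
      apply LinearMap.ext
      intro w
      exact Subsingleton.elim _ _
    have h10 : (1 : B ⊗[A] E) = 0 := by
      rw [Algebra.TensorProduct.one_def]
      rw [Subsingleton.elim (1 : E) 0, tmul_zero]
    haveI : Subsingleton (B ⊗[A] E) := subsingleton_of_zero_eq_one h10.symm
    exact aux_ss_of_subsingleton
  · -- instances
    haveI : SMulCommClass D A W := ⟨fun dd a w => by
      rw [← algebraMap_smul D a w, ← algebraMap_smul D a (dd • w), smul_smul, smul_smul,
        Algebra.commutes]⟩
    haveI : Module.Finite A W := Module.Finite.trans D W
    haveI : FiniteDimensional A E := by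
      refine FiniteDimensional.of_injective
        (LinearMap.restrictScalarsₗ A D W W A) ?_
      exact LinearMap.restrictScalars_injective A
    haveI : Nontrivial E := by
      obtain ⟨w, hw⟩ := exists_ne (0 : W)
      refine nontrivial_of_ne (1 : E) 0 (fun hcon => hw ?_)
      have := LinearMap.ext_iff.mp hcon w
      simpa using this
    -- nondegeneracy of the trace form of End_D(W) over A
    have hT : ∀ x : E, x ≠ 0 → ∃ y : E,
        LinearMap.trace A E (Algebra.lmul A E (x * y)) ≠ 0 := by
      intro x hx
      obtain ⟨w, hw⟩ : ∃ w : W, x w ≠ 0 := by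
        by_contra hcon
        push_neg at hcon
        exact hx (LinearMap.ext fun w => by simpa using hcon w)
      let bW := Module.Free.chooseBasis D W
      set ιW := Module.Free.ChooseBasisIndex D W
      -- ψ i : u ↦ (coord i u) • w
      let ψ : ιW → E := fun i => (LinearMap.toSpanSingleton D W w).comp (bW.coord i)
      -- φ i : sends x w to bW i, extending {x w} to a basis
      have hli : LinearIndepOn D id ({x w} : Set W) :=
        LinearIndepOn.singleton hw
      let b' := Module.Basis.extend hli
      have hmem : x w ∈ hli.extend (Set.subset_univ _) := hli.subset_extend _ rfl
      let φ : ιW → E := fun i =>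
        b'.constr ℕ (fun t => if (t : W) = x w then bW i else 0)
      have hφ : ∀ i, φ i (x w) = bW i := by
        intro i
        have h1 : b' ⟨x w, hmem⟩ = x w := Module.Basis.extend_apply_self hli ⟨x w, hmem⟩
        have := b'.constr_basis ℕ (fun t => if (t : W) = x w then bW i else 0) ⟨x w, hmem⟩
        rw [h1] at this
        rw [this, if_pos rfl]
      have hψ : ∀ i (u : W), ψ i u = bW.repr u i • w := by
        intro i u
        show (LinearMap.id.smulRight w ∘ₗ bW.coord i) u = (bW.repr u) i • w
        rw [LinearMap.comp_apply, Module.Basis.coord_apply, LinearMap.smulRight_apply,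
          LinearMap.id_apply]
      have hsum : ∑ i, φ i * x * ψ i = (1 : E) := by
        apply LinearMap.ext
        intro u
        have : (∑ i, φ i * x * ψ i) u = ∑ i, φ i (x (ψ i u)) := by
          rw [LinearMap.coe_sum, Finset.sum_apply]
          rfl
        rw [this]
        have : ∀ i, φ i (x (ψ i u)) = bW.repr u i • bW i := by
          intro i
          rw [hψ, map_smul, map_smul, hφ]
        simp only [this]
        rw [bW.sum_repr u]
        rfl
      refine ⟨∑ i, ψ i * φ i, ?_⟩
      have hxy : x * (∑ i, ψ i * φ i) = ∑ i, x * ψ i * φ i := by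
        rw [Finset.mul_sum]
        exact Finset.sum_congr rfl fun i _ => (mul_assoc _ _ _).symm
      have htr : LinearMap.trace A E (Algebra.lmul A E (x * ∑ i, ψ i * φ i))
          = LinearMap.trace A E (Algebra.lmul A E (1 : E)) := by
        rw [hxy, map_sum, map_sum]
        have : ∀ i, LinearMap.trace A E (Algebra.lmul A E (x * ψ i * φ i))
            = LinearMap.trace A E (Algebra.lmul A E (φ i * (x * ψ i))) := by
          intro i
          rw [map_mul (Algebra.lmul A E) (x * ψ i) (φ i), LinearMap.trace_mul_comm,
            ← map_mul (Algebra.lmul A E) (φ i) (x * ψ i)]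
        simp only [this]
        rw [← map_sum, ← map_sum]
        have hre : ∑ i, φ i * (x * ψ i) = (1 : E) := by
          rw [← hsum]
          exact Finset.sum_congr rfl fun i _ => (mul_assoc _ _ _).symm
        rw [hre]
      rw [htr, map_one, LinearMap.trace_one]
      have hpos : 0 < Module.finrank A E := Module.finrank_pos
      exact Nat.cast_ne_zero.mpr hpos.ne'
    -- base change nondegeneracy and conclude
    have hTB := aux_trace_nondeg_baseChange A E B hT
    haveI : Module.Finite B (B ⊗[A] E) := Module.Finite.base_change A B E
    exact aux_semisimple_of_trace_nondeg B (B ⊗[A] E) hTB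
end
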